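/- Let z0 ∈ D \ ℝ and x ∈ (0,1). Then the point z0·(z0 − x)/(x·z0 − 1) belongs to V_{ℛ^≥}(z0) but not to V_𝒯(z0); in particular V_𝒯(z0) is a proper subset of V_{ℛ^≥}(z0). -/

import Mathlib

open Complex Set Filter Topology

noncomputable section

/-- The open unit disc. -/
def uDisc : Set ℂ := {z : ℂ | ‖z‖ < 1}

/-- The holomorphic branch of the square root with `√1 = 1` (principal branch). -/
def csqrt (z : ℂ) : ℂ := z ^ (1/2 : ℂ)

/-- `f` has only real Taylor coefficients at `0`, expressed by the symmetry
`f(conj z) = conj (f z)` on the unit disc. -/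
def RealCoeffs (f : ℂ → ℂ) : Prop :=
  ∀ z ∈ uDisc, f ((starRingEnd ℂ) z) = (starRingEnd ℂ) (f z)

/-- The class `𝒰` of univalent self-maps of the unit disc with `f(0) = 0`,
`f'(0) > 0` and real Taylor coefficients. -/
def ClassU (f : ℂ → ℂ) : Prop :=
  DifferentiableOn ℂ f uDisc ∧ InjOn f uDisc ∧ MapsTo f uDisc uDisc ∧
    f 0 = 0 ∧ 0 < (deriv f 0).re ∧ (deriv f 0).im = 0 ∧ RealCoeffs f

/-- The value range `V_𝒰(z0)`. -/
def VU (z0 : ℂ) : Set ℂ := {w : ℂ | ∃ f : ℂ → ℂ, ClassU f ∧ f z0 = w}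

/-- The class `ℛ` of holomorphic self-maps of the unit disc fixing `0`
whose Taylor coefficients at `0` are all real. -/
def ClassR (f : ℂ → ℂ) : Prop :=
  DifferentiableOn ℂ f uDisc ∧ MapsTo f uDisc uDisc ∧ f 0 = 0 ∧ RealCoeffs f

/-- The class `ℛ^≥` of maps in `ℛ` with `f'(0) ≥ 0`. -/
def ClassRge (f : ℂ → ℂ) : Prop :=
  ClassR f ∧ 0 ≤ (deriv f 0).re ∧ (deriv f 0).im = 0

/-- The value range `V_{ℛ^≥}(z0)`. -/
def VRge (z0 : ℂ) : Set ℂ := {w : ℂ | ∃ f : ℂ → ℂ, ClassRge f ∧ f z0 = w}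

/-- The circular arc `C` bounding `V_{ℛ^≥}(z0)`. -/
def arcC (z0 : ℂ) : Set ℂ :=
  (fun x : ℝ => z0^2 * (z0 + 2*(x:ℂ) - 1) / (1 + 2*(x:ℂ)*z0 - z0)) '' Icc 0 1

/-- The class `𝒯` of typically real holomorphic self-maps of the unit disc
with `f(0) = 0` and `f'(0) > 0`. -/
def ClassT (f : ℂ → ℂ) : Prop :=
  DifferentiableOn ℂ f uDisc ∧ MapsTo f uDisc uDisc ∧ f 0 = 0 ∧
    0 < (deriv f 0).re ∧ (deriv f 0).im = 0 ∧
    ∀ z ∈ uDisc, 0 ≤ (f z).im * z.im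

/-- The value range `V_𝒯(z0)`. -/
def VT (z0 : ℂ) : Set ℂ := {w : ℂ | ∃ f : ℂ → ℂ, ClassT f ∧ f z0 = w}

open Metric


lemma uDisc_eq : uDisc = Metric.ball (0:ℂ) 1 := by
  ext z; simp [uDisc, Complex.dist_eq]

lemma isOpen_uDisc : IsOpen uDisc := by rw [uDisc_eq]; exact isOpen_ball

lemma mem_uDisc_iff {z : ℂ} : z ∈ uDisc ↔ Complex.normSq z < 1 := by
  rw [show (z ∈ uDisc) = (‖z‖ < 1) from rfl, ← Complex.sq_norm]
  constructor
  · intro h; nlinarith [norm_nonneg z]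
  · intro h; nlinarith [norm_nonneg z]

lemma nsq_id (a z : ℂ) :
    Complex.normSq (1 - (starRingEnd ℂ) a * z) - Complex.normSq (z - a)
      = (1 - Complex.normSq a) * (1 - Complex.normSq z) := by
  have h : ((1 - (starRingEnd ℂ) a * z) * (starRingEnd ℂ) (1 - (starRingEnd ℂ) a * z)
      - (z - a) * (starRingEnd ℂ) (z - a) : ℂ)
      = (1 - a * (starRingEnd ℂ) a) * (1 - z * (starRingEnd ℂ) z) := by
    simp only [map_sub, map_mul, map_one, Complex.conj_conj]
    ring
  rw [Complex.mul_conj, Complex.mul_conj, Complex.mul_conj, Complex.mul_conj] at h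
  exact_mod_cast h

lemma denom_ne {a z : ℂ} (ha : a ∈ uDisc) (hz : z ∈ uDisc) :
    1 - (starRingEnd ℂ) a * z ≠ 0 := by
  intro h
  have := nsq_id a z
  rw [h] at this
  rw [mem_uDisc_iff] at ha hz
  simp only [Complex.normSq_zero] at this
  nlinarith [Complex.normSq_nonneg (z - a)]

/-- Möbius map sending `a ↦ 0`. -/
def mob (a z : ℂ) : ℂ := (z - a) / (1 - (starRingEnd ℂ) a * z)

lemma mob_mem {a z : ℂ} (ha : a ∈ uDisc) (hz : z ∈ uDisc) : mob a z ∈ uDisc := by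
  rw [mem_uDisc_iff]
  have hd := denom_ne ha hz
  have hd' : 0 < Complex.normSq (1 - (starRingEnd ℂ) a * z) := by
    rcases (Complex.normSq_pos).2 hd with h; exact h
  rw [mob, Complex.normSq_div, div_lt_one hd']
  have := nsq_id a z
  rw [mem_uDisc_iff] at ha hz
  nlinarith

lemma mob_self (a : ℂ) : mob a a = 0 := by simp [mob]

lemma neg_mem_uDisc {a : ℂ} (ha : a ∈ uDisc) : -a ∈ uDisc := by
  rw [mem_uDisc_iff] at *; simpa using ha

lemma mob_inv {a z : ℂ} (ha : a ∈ uDisc) (hz : z ∈ uDisc) :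
    mob (-a) (mob a z) = z := by
  have h1 : 1 - (starRingEnd ℂ) a * z ≠ 0 := denom_ne ha hz
  have h2 : 1 - (starRingEnd ℂ) (-a) * mob a z ≠ 0 :=
    denom_ne (neg_mem_uDisc ha) (mob_mem ha hz)
  have h3 : 1 - (starRingEnd ℂ) a * a ≠ 0 := denom_ne ha ha
  have h3' : 1 - a * (starRingEnd ℂ) a ≠ 0 := by rwa [mul_comm] at h3
  simp only [mob, map_neg, neg_mul, sub_neg_eq_add] at h2 ⊢
  rw [div_eq_iff h2]
  linear_combination div_mul_cancel₀ (z - a) h1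

/-- Real Blaschke involution. -/
def phi0 (x : ℝ) (z : ℂ) : ℂ := (z - x) / ((x:ℂ)*z - 1)

lemma ofReal_mem_uDisc {x : ℝ} (h1 : -1 < x) (h2 : x < 1) : ((x:ℂ)) ∈ uDisc := by
  rw [mem_uDisc_iff, Complex.normSq_ofReal]; nlinarith

lemma phi0_denom_ne {x : ℝ} (hx : (x:ℂ) ∈ uDisc) {z : ℂ} (hz : z ∈ uDisc) :
    (x:ℂ)*z - 1 ≠ 0 := by
  have h := denom_ne hx hz
  rw [Complex.conj_ofReal] at h
  intro hc; apply h
  rw [← neg_eq_zero]; rw [← hc]; ring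

lemma phi0_eq_neg_mob (x : ℝ) (z : ℂ) : phi0 x z = -(mob (x:ℂ) z) := by
  rw [phi0, mob, Complex.conj_ofReal,
    show (x:ℂ)*z - 1 = -(1 - (x:ℂ)*z) by ring, div_neg]

lemma phi0_mem {x : ℝ} (hx : (x:ℂ) ∈ uDisc) {z : ℂ} (hz : z ∈ uDisc) :
    phi0 x z ∈ uDisc := by
  rw [phi0_eq_neg_mob]; exact neg_mem_uDisc (mob_mem hx hz)

lemma phi0_invol {x : ℝ} (hx : (x:ℂ) ∈ uDisc) {z : ℂ} (hz : z ∈ uDisc) :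
    phi0 x (phi0 x z) = z := by
  have h1 := phi0_denom_ne hx hz
  have h2 := phi0_denom_ne hx (phi0_mem hx hz)
  simp only [phi0] at h2 ⊢
  have hx2 : ((x:ℂ))*(x:ℂ) - 1 ≠ 0 := phi0_denom_ne hx hx
  rw [div_eq_iff h2]
  linear_combination (-1 : ℂ) * div_mul_cancel₀ (z - ↑x) h1

lemma phi0_conj (x : ℝ) (z : ℂ) :
    phi0 x ((starRingEnd ℂ) z) = (starRingEnd ℂ) (phi0 x z) := by
  rw [phi0, phi0, map_div₀, map_sub, map_sub, map_mul, map_one, Complex.conj_ofReal]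

/-- the extremal function -/
def f0 (x : ℝ) (z : ℂ) : ℂ := z * (z - (x:ℂ)) / ((x:ℂ)*z - 1)

lemma f0_eq (x : ℝ) (z : ℂ) : f0 x z = z * phi0 x z := by
  rw [f0, phi0, mul_div_assoc]

lemma f0_diff {x : ℝ} (hx : (x:ℂ) ∈ uDisc) : DifferentiableOn ℂ (f0 x) uDisc := by
  apply DifferentiableOn.div
  · exact (differentiable_id.mul (differentiable_id.sub_const _)).differentiableOn
  · exact ((differentiable_id.const_mul _).sub_const _).differentiableOn
  · exact fun z hz => phi0_denom_ne hx hz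

lemma f0_mapsTo {x : ℝ} (hx : (x:ℂ) ∈ uDisc) : MapsTo (f0 x) uDisc uDisc := by
  intro z hz
  rw [f0_eq, mem_uDisc_iff, Complex.normSq_mul]
  have h1 : Complex.normSq z < 1 := mem_uDisc_iff.1 hz
  have h2 : Complex.normSq (phi0 x z) < 1 := mem_uDisc_iff.1 (phi0_mem hx hz)
  nlinarith [Complex.normSq_nonneg z, Complex.normSq_nonneg (phi0 x z)]

lemma f0_deriv (x : ℝ) : deriv (f0 x) 0 = (x:ℂ) := by
  have h1 : HasDerivAt (fun z : ℂ => z * (z - (x:ℂ)))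
      (1 * ((0:ℂ) - x) + 0 * 1) 0 :=
    (hasDerivAt_id 0).mul ((hasDerivAt_id 0).sub_const _)
  have h2 : HasDerivAt (fun z : ℂ => (x:ℂ)*z - 1) ((x:ℂ) * 1) 0 :=
    ((hasDerivAt_id 0).const_mul _).sub_const 1
  have hd : ((x:ℂ)*(0:ℂ) - 1) ≠ 0 := by simp
  have h3 := h1.div h2 hd
  have : deriv (fun z : ℂ => z * (z - (x:ℂ)) / ((x:ℂ)*z - 1)) 0 = _ := h3.deriv
  rw [show f0 x = fun z : ℂ => z * (z - (x:ℂ)) / ((x:ℂ)*z - 1) from rfl, this]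
  field_simp
  ring

lemma f0_realCoeffs (x : ℝ) : RealCoeffs (f0 x) := by
  intro z _
  rw [f0, f0, map_div₀, map_mul, map_sub, map_sub, map_mul, map_one, Complex.conj_ofReal]

lemma f0_classRge {x : ℝ} (hx1 : 0 < x) (hx2 : x < 1) : ClassRge (f0 x) := by
  have hx : (x:ℂ) ∈ uDisc := ofReal_mem_uDisc (by linarith) hx2
  refine ⟨⟨f0_diff hx, f0_mapsTo hx, by simp [f0], f0_realCoeffs x⟩, ?_, ?_⟩
  · rw [f0_deriv]; simp [hx1.le]
  · rw [f0_deriv]; simp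

lemma conj_mem_uDisc {z : ℂ} (hz : z ∈ uDisc) : (starRingEnd ℂ) z ∈ uDisc := by
  rw [mem_uDisc_iff] at *; rwa [Complex.normSq_conj]

lemma hasDerivAt_conj_conj {g : ℂ → ℂ} {d z : ℂ}
    (h : HasDerivAt g d ((starRingEnd ℂ) z)) :
    HasDerivAt (fun w => (starRingEnd ℂ) (g ((starRingEnd ℂ) w))) ((starRingEnd ℂ) d) z := by
  rw [hasDerivAt_iff_tendsto_slope] at h ⊢
  have hconj : Tendsto (fun w : ℂ => (starRingEnd ℂ) w) (𝓝[≠] z)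
      (𝓝[≠] ((starRingEnd ℂ) z)) := by
    apply tendsto_nhdsWithin_of_tendsto_nhds_of_eventually_within
    · exact (Complex.continuous_conj.tendsto z).mono_left nhdsWithin_le_nhds
    · filter_upwards [self_mem_nhdsWithin] with w hw
      simp only [mem_compl_iff, mem_singleton_iff] at hw ⊢
      exact fun hc => hw ((starRingEnd ℂ).injective hc)
  have heq : ∀ w : ℂ, slope (fun w => (starRingEnd ℂ) (g ((starRingEnd ℂ) w))) z w
      = (starRingEnd ℂ) (slope g ((starRingEnd ℂ) z) ((starRingEnd ℂ) w)) := by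
    intro w
    rw [slope_def_field, slope_def_field, map_div₀, map_sub, map_sub, Complex.conj_conj,
      Complex.conj_conj]
  have := (Complex.continuous_conj.tendsto d).comp (h.comp hconj)
  apply this.congr
  intro w
  exact (heq w).symm

lemma im_zero_on_real {g : ℂ → ℂ} (hd : DifferentiableOn ℂ g uDisc)
    (ht : ∀ z ∈ uDisc, 0 ≤ (g z).im * z.im) {t : ℝ} (h : (t:ℂ) ∈ uDisc) :
    (g t).im = 0 := by
  have hc : ContinuousAt g t :=
    (hd.differentiableAt (isOpen_uDisc.mem_nhds h)).continuousAt
  have hmap : Tendsto (fun ε : ℝ => (t:ℂ) + ε * Complex.I) (𝓝 0) (𝓝 (t:ℂ)) := by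
    have hcont : Continuous (fun ε : ℝ => (t:ℂ) + ε * Complex.I) := by continuity
    simpa using hcont.tendsto 0
  have hin : ∀ᶠ ε : ℝ in 𝓝 0, ((t:ℂ) + ε * Complex.I) ∈ uDisc :=
    hmap.eventually (isOpen_uDisc.eventually_mem h)
  have him : Tendsto (fun ε : ℝ => (g ((t:ℂ) + ε * Complex.I)).im) (𝓝 0) (𝓝 (g t).im) :=
    (Complex.continuous_im.tendsto _).comp (hc.tendsto.comp hmap)
  have h1 : 0 ≤ (g t).im := by
    refine ge_of_tendsto (him.mono_left (nhdsWithin_le_nhds : 𝓝[>] (0:ℝ) ≤ 𝓝 0)) ?_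
    filter_upwards [hin.filter_mono nhdsWithin_le_nhds, self_mem_nhdsWithin] with ε hε hpos
    have := ht _ hε
    have himz : ((t:ℂ) + ε * Complex.I).im = ε := by simp
    rw [himz] at this
    have hpos' : (0:ℝ) < ε := hpos
    nlinarith
  have h2 : (g t).im ≤ 0 := by
    refine le_of_tendsto (him.mono_left (nhdsWithin_le_nhds : 𝓝[<] (0:ℝ) ≤ 𝓝 0)) ?_
    filter_upwards [hin.filter_mono nhdsWithin_le_nhds, self_mem_nhdsWithin] with ε hε hneg
    have := ht _ hε
    have himz : ((t:ℂ) + ε * Complex.I).im = ε := by simp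
    rw [himz] at this
    have hneg' : ε < (0:ℝ) := hneg
    nlinarith
  linarith

lemma realCoeffs_of_typ {g : ℂ → ℂ} (hd : DifferentiableOn ℂ g uDisc)
    (ht : ∀ z ∈ uDisc, 0 ≤ (g z).im * z.im) : RealCoeffs g := by
  set G : ℂ → ℂ := fun w => (starRingEnd ℂ) (g ((starRingEnd ℂ) w)) with hG
  have hGd : DifferentiableOn ℂ G uDisc := by
    intro z hz
    have hz' : (starRingEnd ℂ) z ∈ uDisc := conj_mem_uDisc hz
    have h1 := (hd.differentiableAt (isOpen_uDisc.mem_nhds hz')).hasDerivAt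
    exact (hasDerivAt_conj_conj h1).differentiableAt.differentiableWithinAt
  have hAn : AnalyticOnNhd ℂ g uDisc := hd.analyticOnNhd isOpen_uDisc
  have hAnG : AnalyticOnNhd ℂ G uDisc := hGd.analyticOnNhd isOpen_uDisc
  have hpre : IsPreconnected uDisc := by
    rw [uDisc_eq]; exact (convex_ball _ _).isPreconnected
  have h0 : (0:ℂ) ∈ uDisc := by simp [uDisc]
  have hfreq : ∃ᶠ z in 𝓝[≠] (0:ℂ), g z = G z := by
    have hat : Tendsto (fun n : ℕ => ((n:ℝ)+2)) atTop atTop :=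
      tendsto_atTop_add_const_right _ 2 tendsto_natCast_atTop_atTop
    have htreal : Tendsto (fun n : ℕ => (1 / ((n:ℝ)+2) : ℝ)) atTop (𝓝 0) := by
      have := hat.inv_tendsto_atTop; simp only [one_div]; exact this
    have htend : Tendsto (fun n : ℕ => ((1/((n:ℝ)+2) : ℝ) : ℂ)) atTop (𝓝[≠] 0) := by
      apply tendsto_nhdsWithin_of_tendsto_nhds_of_eventually_within
      · exact (Complex.continuous_ofReal.tendsto 0).comp htreal
      · apply Eventually.of_forall
        intro n
        simp only [mem_compl_iff, mem_singleton_iff, Complex.ofReal_eq_zero]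
        positivity
    apply htend.frequently
    apply Frequently.of_forall
    intro n
    have hlt : (1/((n:ℝ)+2) : ℝ) < 1 := by
      rw [div_lt_one (by positivity)]
      nlinarith [Nat.cast_nonneg (α := ℝ) n]
    have hpos : (0:ℝ) < 1/((n:ℝ)+2) := by positivity
    have hmem : ((1/((n:ℝ)+2) : ℝ) : ℂ) ∈ uDisc :=
      ofReal_mem_uDisc (by linarith) hlt
    have him0 := im_zero_on_real hd ht hmem
    have hconjt : (starRingEnd ℂ) ((1/((n:ℝ)+2) : ℝ) : ℂ) = ((1/((n:ℝ)+2) : ℝ) : ℂ) :=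
      Complex.conj_ofReal _
    rw [hG]
    simp only [hconjt]
    exact (Complex.conj_eq_iff_im.2 him0).symm
  have heq := hAn.eqOn_of_preconnected_of_frequently_eq hAnG hpre h0 hfreq
  intro z hz
  have hz' : (starRingEnd ℂ) z ∈ uDisc := conj_mem_uDisc hz
  have := heq hz'
  rw [hG] at this
  simp only [Complex.conj_conj] at this
  exact this

def z1 (x : ℝ) : ℂ := (((1+x)/2 : ℝ) : ℂ) + (((1-x)/4 : ℝ) : ℂ) * Complex.I

lemma z1_re (x : ℝ) : (z1 x).re = (1+x)/2 := by simp [z1]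
lemma z1_im (x : ℝ) : (z1 x).im = (1-x)/4 := by simp [z1]

lemma z1_mem {x : ℝ} (hx1 : 0 < x) (hx2 : x < 1) : z1 x ∈ uDisc := by
  rw [mem_uDisc_iff, Complex.normSq_apply, z1_re, z1_im]
  nlinarith

lemma z1_ne_zero {x : ℝ} (hx2 : x < 1) : z1 x ≠ 0 := by
  intro h
  have := congrArg Complex.im h
  rw [z1_im] at this
  simp at this
  linarith

lemma keyneg {x : ℝ} (hx1 : 0 < x) (hx2 : x < 1) :
    (f0 x (z1 x)).im * (z1 x).im < 0 := by
  have hx : (x:ℂ) ∈ uDisc := ofReal_mem_uDisc (by linarith) hx2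
  have hz1 : z1 x ∈ uDisc := z1_mem hx1 hx2
  have hd : (x:ℂ) * z1 x - 1 ≠ 0 := phi0_denom_ne hx hz1
  have hD : 0 < Complex.normSq ((x:ℂ) * z1 x - 1) := Complex.normSq_pos.2 hd
  rw [f0, Complex.div_im]
  set n := z1 x * (z1 x - (x:ℂ)) with hn
  set d := (x:ℂ) * z1 x - 1 with hdd
  have heq : (n.im * d.re / Complex.normSq d - n.re * d.im / Complex.normSq d) * (z1 x).im
      = ((n.im * d.re - n.re * d.im) * (z1 x).im) / Complex.normSq d := by ring
  rw [heq]
  apply div_neg_of_neg_of_pos _ hD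
  have hnre : n.re = (z1 x).re * (z1 x).re - (z1 x).im * (z1 x).im - x * (z1 x).re := by
    rw [hn]; simp [Complex.mul_re]; ring
  have hnim : n.im = 2 * (z1 x).re * (z1 x).im - x * (z1 x).im := by
    rw [hn]; simp [Complex.mul_im]; ring
  have hdre : d.re = x * (z1 x).re - 1 := by rw [hdd]; simp [Complex.mul_re]
  have hdim : d.im = x * (z1 x).im := by rw [hdd]; simp [Complex.mul_im]
  rw [hnre, hnim, hdre, hdim, z1_re, z1_im]
  have hx3 : x^3 < 1 := pow_lt_one₀ hx1.le hx2 (by norm_num)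
  have hxx : x^2 < 1 := pow_lt_one₀ hx1.le hx2 (by norm_num)
  have h5 : 5*x^3 + 6*x^2 + 5*x - 16 < 0 := by linarith
  have hb : 0 < (1-x)^2 := pow_pos (by linarith) 2
  have hcalc : ((2 * ((1 + x) / 2) * ((1 - x) / 4) - x * ((1 - x) / 4)) * (x * ((1 + x) / 2) - 1) -
        ((1 + x) / 2 * ((1 + x) / 2) - (1 - x) / 4 * ((1 - x) / 4) - x * ((1 + x) / 2)) *
          (x * ((1 - x) / 4))) * ((1 - x) / 4)
      = (1-x)^2 * (5*x^3 + 6*x^2 + 5*x - 16) / 256 := by ring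
  rw [hcalc]
  apply div_neg_of_neg_of_pos (mul_neg_of_pos_of_neg hb h5) (by norm_num)

lemma mem_ball_of_uDisc {z : ℂ} (h : z ∈ uDisc) : z ∈ Metric.ball (0:ℂ) 1 := uDisc_eq ▸ h

lemma f0_not_mem_VT {z0 : ℂ} (hz0 : z0 ∈ uDisc) (him : z0.im ≠ 0)
    {x : ℝ} (hx1 : 0 < x) (hx2 : x < 1) : f0 x z0 ∉ VT z0 := by
  rintro ⟨g, ⟨hgd, hgm, hg0, hgdr, hgdi, hgt⟩, hgz0⟩
  have hz0ne : z0 ≠ 0 := fun h => him (by simp [h])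
  have hx : (x:ℂ) ∈ uDisc := ofReal_mem_uDisc (by linarith) hx2
  have hrc : RealCoeffs g := realCoeffs_of_typ hgd hgt
  have hgdB : DifferentiableOn ℂ g (Metric.ball (0:ℂ) 1) := by rwa [← uDisc_eq]
  have hgmB : MapsTo g (Metric.ball (0:ℂ) 1) (Metric.ball (g 0) 1) := by
    rw [hg0, ← uDisc_eq]; exact hgm
  set φ : ℂ → ℂ := dslope g 0 with hφ
  have hφle : ∀ z ∈ uDisc, ‖φ z‖ ≤ 1 := by
    intro z hz
    have := Complex.norm_dslope_le_div_of_mapsTo_ball hgdB (hgmB.mono_right ball_subset_closedBall) (mem_ball_of_uDisc hz)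
    simpa using this
  have hφz0 : φ z0 = phi0 x z0 := by
    rw [hφ, dslope_of_ne _ hz0ne, slope_def_field, hg0, sub_zero, sub_zero, hgz0, f0_eq,
      mul_comm, mul_div_assoc, div_self hz0ne, mul_one]
  have habs : ‖g z0‖ < ‖z0‖ := by
    rw [hgz0, f0_eq, norm_mul]
    have h1 : ‖phi0 x z0‖ < 1 := phi0_mem hx hz0
    have h2 : 0 < ‖z0‖ := norm_pos_iff.2 hz0ne
    exact mul_lt_of_lt_one_right h2 h1
  have hφmem : ∀ z ∈ uDisc, φ z ∈ uDisc := by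
    intro z hz
    by_contra h
    have h1 : ‖φ z‖ = 1 := le_antisymm (hφle z hz) (not_lt.1 h)
    have heq1 : ‖dslope g 0 z‖ = 1/1 := by
      rw [← hφ]; simpa using h1
    have haff := Complex.affine_of_mapsTo_ball_of_exists_norm_dslope_eq_div hgdB (hgmB.mono_right ball_subset_closedBall)
      (mem_ball_of_uDisc hz) heq1
    have h2 := haff (mem_ball_of_uDisc hz0)
    simp only [hg0, zero_add, sub_zero, smul_eq_mul] at h2
    have h3 : ‖g z0‖ = ‖z0‖ := by
      rw [h2, norm_mul, ← hφ, h1, mul_one]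
    linarith [habs, h3.ge, h3.le]
  have hφd : DifferentiableOn ℂ φ uDisc := by
    rw [hφ, uDisc_eq]
    exact (differentiableOn_dslope (isOpen_ball.mem_nhds (by simp))).mpr hgdB
  have hz0c : (starRingEnd ℂ) z0 ∈ uDisc := conj_mem_uDisc hz0
  have hz0cne : (starRingEnd ℂ) z0 ≠ 0 := fun h => hz0ne (by
    have := congrArg (starRingEnd ℂ) h
    simpa using this)
  have hφconj : φ ((starRingEnd ℂ) z0) = (starRingEnd ℂ) (phi0 x z0) := by
    rw [hφ, dslope_of_ne _ hz0cne, slope_def_field, hg0, sub_zero, sub_zero, hrc z0 hz0,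
      hgz0, ← map_div₀, f0_eq, mul_comm, mul_div_assoc, div_self hz0ne, mul_one]
  set G : ℂ → ℂ := fun z => phi0 x (φ z) with hGdef
  have hGd : DifferentiableOn ℂ G uDisc := by
    have : G = fun z => (φ z - (x:ℂ)) / ((x:ℂ) * φ z - 1) := rfl
    rw [this]
    exact DifferentiableOn.div (hφd.sub_const _)
      ((hφd.const_mul _).sub_const _) (fun z hz => phi0_denom_ne hx (hφmem z hz))
  have hGm : ∀ z ∈ uDisc, G z ∈ uDisc := fun z hz => phi0_mem hx (hφmem z hz)
  have hGz0 : G z0 = z0 := by rw [hGdef]; simp only; rw [hφz0, phi0_invol hx hz0]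
  have hGz0c : G ((starRingEnd ℂ) z0) = (starRingEnd ℂ) z0 := by
    rw [hGdef]; simp only
    rw [hφconj, phi0_conj, phi0_invol hx hz0]
  have hnegz0 : -z0 ∈ uDisc := neg_mem_uDisc hz0
  set u : ℂ → ℂ := fun z => mob (-z0) z with hu
  set H : ℂ → ℂ := fun z => mob z0 (G (u z)) with hH
  have hud : DifferentiableOn ℂ u uDisc := by
    rw [hu]
    have : (fun z => mob (-z0) z) = fun z : ℂ =>
        (z - (-z0)) / (1 - (starRingEnd ℂ) (-z0) * z) := rfl
    rw [this]
    exact DifferentiableOn.div ((differentiable_id.sub_const _).differentiableOn)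
      (((differentiable_const _).sub ((differentiable_const _).mul differentiable_id)).differentiableOn)
      (fun z hz => denom_ne hnegz0 hz)
  have humem : ∀ z ∈ uDisc, u z ∈ uDisc := fun z hz => mob_mem hnegz0 hz
  have hGu : DifferentiableOn ℂ (fun z => G (u z)) uDisc :=
    hGd.comp hud humem
  have hGumem : ∀ z ∈ uDisc, G (u z) ∈ uDisc := fun z hz => hGm _ (humem z hz)
  have hHd : DifferentiableOn ℂ H uDisc := by
    rw [hH]
    have : (fun z => mob z0 (G (u z))) = fun z : ℂ =>
        (G (u z) - z0) / (1 - (starRingEnd ℂ) z0 * G (u z)) := rfl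
    rw [this]
    exact DifferentiableOn.div (hGu.sub_const _)
      ((differentiable_const _).differentiableOn.sub
        (((differentiable_const _).differentiableOn : DifferentiableOn ℂ _ uDisc).mul hGu))
      (fun z hz => denom_ne hz0 (hGumem z hz))
  have hHmem : ∀ z ∈ uDisc, H z ∈ uDisc := fun z hz => mob_mem hz0 (hGumem z hz)
  have hu0 : u 0 = z0 := by rw [hu]; simp [mob]
  have hH0 : H 0 = 0 := by rw [hH]; simp only [hu0, hGz0, mob_self]
  set a : ℂ := mob z0 ((starRingEnd ℂ) z0) with ha
  have ha_mem : a ∈ uDisc := mob_mem hz0 hz0c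
  have ha_ne : a ≠ 0 := by
    rw [ha, mob]
    apply div_ne_zero
    · rw [sub_ne_zero]
      intro hc
      exact him (Complex.conj_eq_iff_im.1 hc)
    · exact denom_ne hz0 hz0c
  have hua : u a = (starRingEnd ℂ) z0 := by rw [hu, ha]; exact mob_inv hz0 hz0c
  have hHa : H a = a := by rw [hH]; simp only [hua, hGz0c]; exact ha.symm
  have hHdB : DifferentiableOn ℂ H (Metric.ball (0:ℂ) 1) := by rwa [← uDisc_eq]
  have hHmB : MapsTo H (Metric.ball (0:ℂ) 1) (Metric.ball (H 0) 1) := by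
    rw [hH0, ← uDisc_eq]; exact fun z hz => hHmem z hz
  have hds : dslope H 0 a = 1 := by
    rw [dslope_of_ne _ ha_ne, slope_def_field, hH0, sub_zero, sub_zero, hHa, div_self ha_ne]
  have heqn : ‖dslope H 0 a‖ = 1/1 := by rw [hds]; simp
  have haff := Complex.affine_of_mapsTo_ball_of_exists_norm_dslope_eq_div hHdB (hHmB.mono_right ball_subset_closedBall)
    (mem_ball_of_uDisc ha_mem) heqn
  have hHid : ∀ z ∈ uDisc, H z = z := by
    intro z hz
    have := haff (mem_ball_of_uDisc hz)
    simpa [hH0, hds] using this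
  have hGid : ∀ z ∈ uDisc, G z = z := by
    intro z hz
    have h1 := hHid (mob z0 z) (mob_mem hz0 hz)
    rw [hH] at h1
    simp only at h1
    rw [hu] at h1
    simp only at h1
    rw [mob_inv hz0 hz] at h1
    have h3 := congrArg (mob (-z0)) h1
    rwa [mob_inv hz0 (hGm z hz), mob_inv hz0 hz] at h3
  have hφeq : ∀ z ∈ uDisc, φ z = phi0 x z := by
    intro z hz
    have h1 := hGid z hz
    rw [hGdef] at h1
    simp only at h1
    have h4 := congrArg (phi0 x) h1
    rwa [phi0_invol hx (hφmem z hz)] at h4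
  have hz1m := z1_mem hx1 hx2
  have hz1ne := z1_ne_zero hx2
  have h5 : φ (z1 x) = g (z1 x) / z1 x := by
    rw [hφ, dslope_of_ne _ hz1ne, slope_def_field, hg0, sub_zero, sub_zero]
  have h6 : g (z1 x) = z1 x * phi0 x (z1 x) := by
    rw [← hφeq _ hz1m, h5]
    field_simp
  have h7 := hgt (z1 x) hz1m
  rw [h6, ← f0_eq] at h7
  exact absurd h7 (not_le.2 (keyneg hx1 hx2))

theorem valueRange_ClassT_ssubset_ClassRge (z0 : ℂ) (hz0 : z0 ∈ uDisc) (him : z0.im ≠ 0)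
    (x : ℝ) (hx1 : 0 < x) (hx2 : x < 1) :
    z0 * (z0 - (x:ℂ)) / ((x:ℂ)*z0 - 1) ∈ VRge z0 ∧
    z0 * (z0 - (x:ℂ)) / ((x:ℂ)*z0 - 1) ∉ VT z0 ∧
    VT z0 ⊂ VRge z0 := by
  have hw : z0 * (z0 - (x:ℂ)) / ((x:ℂ)*z0 - 1) = f0 x z0 := rfl
  have hmem : z0 * (z0 - (x:ℂ)) / ((x:ℂ)*z0 - 1) ∈ VRge z0 :=
    ⟨f0 x, f0_classRge hx1 hx2, rfl⟩
  have hnot : z0 * (z0 - (x:ℂ)) / ((x:ℂ)*z0 - 1) ∉ VT z0 := by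
    rw [hw]; exact f0_not_mem_VT hz0 him hx1 hx2
  refine ⟨hmem, hnot, ?_, ?_⟩
  · rintro w ⟨g, ⟨hgd, hgm, hg0, hdr, hdi, hgt⟩, hgw⟩
    exact ⟨g, ⟨⟨hgd, hgm, hg0, realCoeffs_of_typ hgd hgt⟩, hdr.le, hdi⟩, hgw⟩
  · intro hc
    exact hnot (hc hmem)
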